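/- For all positive integers m and n, the infinite series sum over i >= 1 of 1/(L_{2m(i-1)+n} * L_{2m(i+1)+n}) converges to (1/(5 * F_n * F_{4m})) * (2/L_n + L_{2m}/L_{2m+n} - 2/Φ^n), where Φ = (1+√5)/2. -/

import Mathlib

def lucas : ℕ → ℕ
  | 0 => 2
  | 1 => 1
  | n + 2 => lucas (n + 1) + lucas n

noncomputable def gr : ℝ := (1 + Real.sqrt 5) / 2
noncomputable def gc : ℝ := (1 - Real.sqrt 5) / 2

lemma s5 : Real.sqrt 5 * Real.sqrt 5 = 5 := Real.mul_self_sqrt (by norm_num)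

lemma s5_gt : 2 < Real.sqrt 5 := by
  have := Real.sq_sqrt (by norm_num : (5:ℝ) ≥ 0)
  nlinarith [Real.sqrt_nonneg 5]

lemma gr_gt : 1 < gr := by unfold gr; nlinarith [s5_gt]
lemma gr_pos : 0 < gr := lt_trans one_pos gr_gt
lemma grgc : gr * gc = -1 := by unfold gr gc; nlinarith [s5]
lemma gr_sq : gr ^ 2 = gr + 1 := by unfold gr; nlinarith [s5]
lemma gc_sq : gc ^ 2 = gc + 1 := by unfold gc; nlinarith [s5]

lemma lucas_closed : ∀ k, (lucas k : ℝ) = gr ^ k + gc ^ k := by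
  intro k
  induction k using Nat.twoStepInduction with
  | zero => simp [lucas, gr, gc]; norm_num
  | one => simp [lucas, gr, gc]
  | more k ih1 ih2 =>
    show ((lucas (k+1) + lucas k : ℕ) : ℝ) = _
    push_cast
    rw [ih1, ih2]
    have h1 : gr ^ (k + 2) = gr ^ k * gr ^ 2 := by ring
    have h2 : gc ^ (k + 2) = gc ^ k * gc ^ 2 := by ring
    rw [h1, h2, gr_sq, gc_sq]; ring

lemma fib_closed : ∀ k, Real.sqrt 5 * (Nat.fib k : ℝ) = gr ^ k - gc ^ k := by
  intro k
  induction k using Nat.twoStepInduction with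
  | zero => simp
  | one => simp [gr, gc]
  | more k ih1 ih2 =>
    rw [Nat.fib_add_two]
    push_cast
    rw [mul_add, ih1, ih2]
    have h1 : gr ^ (k + 2) = gr ^ k * gr ^ 2 := by ring
    have h2 : gc ^ (k + 2) = gc ^ k * gc ^ 2 := by ring
    rw [h1, h2, gr_sq, gc_sq]; ring

lemma lucas_pos : ∀ k, 0 < lucas k := by
  intro k
  induction k using Nat.twoStepInduction with
  | zero => norm_num [lucas]
  | one => norm_num [lucas]
  | more k ih1 ih2 => show 0 < lucas (k+1) + lucas k; omega

lemma pow_grgc_even (j : ℕ) : gc ^ (2 * j) * gr ^ (2 * j) = 1 := by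
  rw [← mul_pow, mul_comm gc gr, grgc]
  rw [pow_mul]; norm_num

lemma key (m a : ℕ) :
    gr ^ (4 * m) * (lucas (a + 4 * m) : ℝ) - (lucas a : ℝ)
      = (Real.sqrt 5 * (Nat.fib (4 * m) : ℝ)) * gr ^ (a + 4 * m) := by
  rw [lucas_closed, lucas_closed, fib_closed]
  have hBD : gc ^ (4 * m) * gr ^ (4 * m) = 1 := by
    have := pow_grgc_even (2 * m)
    rw [show 2 * (2 * m) = 4 * m by ring] at this
    exact this
  rw [pow_add, pow_add]
  linear_combination (gr ^ a + gc ^ a) * hBD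

lemma lucas_cast_pos (k : ℕ) : (0:ℝ) < (lucas k : ℝ) := by
  exact_mod_cast lucas_pos k

lemma term_eq (m n i : ℕ) (hm : 0 < m) :
    1 / ((lucas (2 * m * i + n) : ℝ) * (lucas (2 * m * (i + 2) + n) : ℝ))
      = ((gr ^ (2 * m * i + n) * (lucas (2 * m * i + n) : ℝ))⁻¹
          - (gr ^ (2 * m * (i + 2) + n) * (lucas (2 * m * (i + 2) + n) : ℝ))⁻¹)
        / (Real.sqrt 5 * (Nat.fib (4 * m) : ℝ)) := by
  have hab : 2 * m * (i + 2) + n = (2 * m * i + n) + 4 * m := by ring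
  rw [hab]
  set a := 2 * m * i + n with ha
  have hk := key m a
  have hLa := lucas_cast_pos a
  have hLb := lucas_cast_pos (a + 4 * m)
  have hgra : (0:ℝ) < gr ^ a := pow_pos gr_pos a
  have hgrb : (0:ℝ) < gr ^ (a + 4 * m) := pow_pos gr_pos _
  have hF : (0:ℝ) < (Nat.fib (4 * m) : ℝ) := by
    exact_mod_cast Nat.fib_pos.mpr (by omega)
  have hs : (0:ℝ) < Real.sqrt 5 := Real.sqrt_pos.mpr (by norm_num)
  have h1 : gr ^ (a + 4 * m) = gr ^ a * gr ^ (4 * m) := pow_add gr a (4 * m)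
  have hg4 : (0:ℝ) < gr ^ (4 * m) := pow_pos gr_pos _
  rw [h1] at hk ⊢
  field_simp
  linear_combination -hk

lemma alg (P Q R S : ℝ) (hP : P ≠ 0) (hRS : R * S = 1)
    (hLn : P + Q ≠ 0) (hLmn : R * P + S * Q ≠ 0) :
    2 / (P + Q) + (R + S) / (R * P + S * Q) - 2 / P
      = (P - Q) * ((P * (P + Q))⁻¹ + (R * P * (R * P + S * Q))⁻¹) := by
  have hR : R ≠ 0 := left_ne_zero_of_mul_eq_one hRS
  have hS : S = R⁻¹ := eq_inv_of_mul_eq_one_right hRS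
  subst hS
  have h2 : P * R ^ 2 + Q ≠ 0 := by
    have : P * R ^ 2 + Q = R * (R * P + R⁻¹ * Q) := by field_simp
    rw [this]; exact mul_ne_zero hR hLmn
  field_simp
  ring

set_option maxHeartbeats 1000000 in
lemma value (m n : ℕ) (hm : 0 < m) (hn : 0 < n) :
    (1 / (5 * (Nat.fib n : ℝ) * (Nat.fib (4 * m) : ℝ))) *
        (2 / (lucas n : ℝ) + (lucas (2 * m) : ℝ) / (lucas (2 * m + n) : ℝ)
          - 2 / gr ^ n)
    = ((gr ^ n * (lucas n : ℝ))⁻¹ + (gr ^ (2 * m + n) * (lucas (2 * m + n) : ℝ))⁻¹)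
        / (Real.sqrt 5 * (Nat.fib (4 * m) : ℝ)) := by
  have hs0 : (0:ℝ) < Real.sqrt 5 := Real.sqrt_pos.mpr (by norm_num)
  have hsne : Real.sqrt 5 ≠ 0 := hs0.ne'
  have hgr0 : gr ≠ 0 := gr_pos.ne'
  have hRS : gc ^ (2 * m) * gr ^ (2 * m) = 1 := pow_grgc_even m
  have hS : gc ^ (2 * m) = (gr ^ (2 * m))⁻¹ := eq_inv_of_mul_eq_one_left hRS
  have hP : gr ^ n ≠ 0 := pow_ne_zero _ hgr0
  have hR : gr ^ (2 * m) ≠ 0 := pow_ne_zero _ hgr0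
  have A1 : gr ^ n + gc ^ n ≠ 0 := by rw [← lucas_closed]; exact (lucas_cast_pos n).ne'
  have A2 : gr ^ (2 * m) * gr ^ n + (gr ^ (2 * m))⁻¹ * gc ^ n ≠ 0 := by
    have h := lucas_cast_pos (2 * m + n)
    rw [lucas_closed, pow_add, pow_add, hS] at h
    exact h.ne'
  have hFn : (Nat.fib n : ℝ) ≠ 0 := by
    have : (0:ℝ) < (Nat.fib n : ℝ) := by exact_mod_cast Nat.fib_pos.mpr hn
    exact this.ne'
  have hF4 : (Nat.fib (4 * m) : ℝ) ≠ 0 := by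
    have : (0:ℝ) < (Nat.fib (4 * m) : ℝ) := by
      exact_mod_cast Nat.fib_pos.mpr (by omega)
    exact this.ne'
  rw [lucas_closed n, lucas_closed (2 * m), lucas_closed (2 * m + n),
    pow_add gr (2*m) n, pow_add gc (2*m) n, hS]
  rw [alg (gr ^ n) (gc ^ n) (gr ^ (2 * m)) ((gr ^ (2 * m))⁻¹) hP (mul_inv_cancel₀ hR) A1 A2]
  rw [← fib_closed n]
  set U : ℝ := (gr ^ n * (gr ^ n + gc ^ n))⁻¹ +
      (gr ^ (2 * m) * gr ^ n * (gr ^ (2 * m) * gr ^ n + (gr ^ (2 * m))⁻¹ * gc ^ n))⁻¹ with hU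
  have h5 : Real.sqrt 5 ^ 2 = 5 := by rw [sq]; exact s5
  field_simp
  rw [h5]

theorem stmt_11 (m n : ℕ) (hm : 0 < m) (hn : 0 < n) :
    HasSum (fun i : ℕ =>
      1 / ((lucas (2 * m * i + n) : ℝ) * (lucas (2 * m * (i + 2) + n) : ℝ)))
      ((1 / (5 * (Nat.fib n : ℝ) * (Nat.fib (4 * m) : ℝ))) *
        (2 / (lucas n : ℝ) + (lucas (2 * m) : ℝ) / (lucas (2 * m + n) : ℝ)
          - 2 / ((1 + Real.sqrt 5) / 2) ^ n)) := by
  have hs0 : (0:ℝ) < Real.sqrt 5 := Real.sqrt_pos.mpr (by norm_num)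
  have hF4 : (0:ℝ) < (Nat.fib (4 * m) : ℝ) := by
    exact_mod_cast Nat.fib_pos.mpr (by omega)
  set K : ℝ := Real.sqrt 5 * (Nat.fib (4 * m) : ℝ) with hK
  have hKpos : 0 < K := mul_pos hs0 hF4
  set u : ℕ → ℝ := fun i => (gr ^ (2 * m * i + n) * (lucas (2 * m * i + n) : ℝ))⁻¹ with hu
  have hupos : ∀ i, 0 < u i := fun i =>
    inv_pos.mpr (mul_pos (pow_pos gr_pos _) (lucas_cast_pos _))
  set h : ℕ → ℝ := fun i => (u i + u (i + 1)) / K with hh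
  set f : ℕ → ℝ := fun i =>
    1 / ((lucas (2 * m * i + n) : ℝ) * (lucas (2 * m * (i + 2) + n) : ℝ)) with hf
  have hterm : ∀ i, f i = h i - h (i + 1) := by
    intro i
    have t := term_eq m n i hm
    have e1 : 2 * m * (i + 1) + n = 2 * m * i + n + 2 * m := by ring
    show (1:ℝ) / _ = _
    rw [t]
    simp only [hh, hu]
    rw [div_sub_div_same]
    congr 1
    ring
  have hsum : ∀ N, ∑ i ∈ Finset.range N, f i = h 0 - h N := by
    intro N
    calc ∑ i ∈ Finset.range N, f i = ∑ i ∈ Finset.range N, (h i - h (i + 1)) := by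
          exact Finset.sum_congr rfl fun i _ => hterm i
      _ = h 0 - h N := Finset.sum_range_sub' h N
  -- u tends to 0
  have hgr1 : (1:ℝ) < gr := gr_gt
  have hbound : ∀ i, u i ≤ (gr⁻¹) ^ i := by
    intro i
    have hL1 : (1:ℝ) ≤ (lucas (2 * m * i + n) : ℝ) := by
      exact_mod_cast lucas_pos (2 * m * i + n)
    have hge : gr ^ i ≤ gr ^ (2 * m * i + n) := by
      apply pow_le_pow_right₀ hgr1.le
      calc i = 1 * i := (one_mul i).symm
        _ ≤ 2 * m * i + n := by nlinarith
    have h1 : gr ^ i ≤ gr ^ (2 * m * i + n) * (lucas (2 * m * i + n) : ℝ) := by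
      nlinarith [pow_pos gr_pos (2 * m * i + n)]
    have h2 : (gr ^ (2 * m * i + n) * (lucas (2 * m * i + n) : ℝ))⁻¹ ≤ (gr ^ i)⁻¹ :=
      inv_anti₀ (pow_pos gr_pos i) h1
    simpa only [hu, inv_pow] using h2
  have htend : Filter.Tendsto u Filter.atTop (nhds 0) := by
    apply squeeze_zero (fun i => (hupos i).le) hbound
    apply tendsto_pow_atTop_nhds_zero_of_lt_one (by positivity)
    rw [inv_lt_one_iff₀]
    right; exact hgr1
  have htend1 : Filter.Tendsto (fun i => u (i + 1)) Filter.atTop (nhds 0) :=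
    htend.comp (Filter.tendsto_add_atTop_nat 1)
  have hhtend : Filter.Tendsto h Filter.atTop (nhds 0) := by
    have := (htend.add htend1).div_const K
    simpa using this
  have hpart : Filter.Tendsto (fun N => ∑ i ∈ Finset.range N, f i) Filter.atTop
      (nhds (h 0)) := by
    simp only [hsum]
    have := (tendsto_const_nhds (x := h 0)).sub hhtend
    simpa using this
  have hfnn : ∀ i, 0 ≤ f i := fun i => by
    have := mul_pos (lucas_cast_pos (2 * m * i + n)) (lucas_cast_pos (2 * m * (i + 2) + n))
    positivity
  rw [show ((1 + Real.sqrt 5) / 2 : ℝ) = gr from rfl]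
  rw [value m n hm hn]
  rw [hasSum_iff_tendsto_nat_of_nonneg hfnn]
  have hval : ((gr ^ n * (lucas n : ℝ))⁻¹ + (gr ^ (2 * m + n) * (lucas (2 * m + n) : ℝ))⁻¹) / K
      = h 0 := by
    simp only [hh, hu]
    norm_num
  rw [hval]
  exact hpart
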